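/- Let Q be a nonzero real number and let α ∈ [0, π) with α ≠ π/2. Then (cos α + (sin α)·(Q + i))/(sin α − (cos α)·(Q + i)) = −Q + i if and only if tan α = Q/2. (The denominator sin α − (cos α)·(Q + i) is nonzero since its imaginary part −cos α is nonzero.) -/

import Mathlib

/-- For a nonzero real `Q` and `α ∈ [0, π)` with `α ≠ π/2`, the unimodular
transform of `Q + i` equals `-Q + i` if and only if `tan α = Q / 2`. -/
theorem stmt_8 (Q : ℝ) (hQ : Q ≠ 0) (α : ℝ) (hα : α ∈ Set.Ico 0 Real.pi)
    (hα2 : α ≠ Real.pi / 2) :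
    ((Real.cos α : ℂ) + (Real.sin α : ℂ) * ((Q : ℂ) + Complex.I)) /
      ((Real.sin α : ℂ) - (Real.cos α : ℂ) * ((Q : ℂ) + Complex.I)) =
      -(Q : ℂ) + Complex.I ↔ Real.tan α = Q / 2 := by
  have hc : Real.cos α ≠ 0 := by
    intro h
    rw [Real.cos_eq_zero_iff] at h
    obtain ⟨k, hk⟩ := h
    obtain ⟨h0, h1⟩ := hα
    apply hα2
    have hk0 : (k : ℝ) = 0 := by
      rcases lt_trichotomy (k : ℝ) 0 with h | h | h
      · exfalso
        have hk1 : (k : ℝ) ≤ -1 := by exact_mod_cast Int.le_of_lt_add_one (by exact_mod_cast h)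
        nlinarith [Real.pi_pos]
      · exact h
      · exfalso
        have hk1 : (1 : ℝ) ≤ (k : ℝ) := by exact_mod_cast h
        nlinarith [Real.pi_pos]
    rw [hk0] at hk; linarith
  have hd : ((Real.sin α : ℂ) - (Real.cos α : ℂ) * ((Q : ℂ) + Complex.I)) ≠ 0 := by
    intro h
    apply hc
    have := congrArg Complex.im h
    simpa [-Complex.ofReal_cos, -Complex.ofReal_sin] using this
  rw [div_eq_iff hd, Real.tan_eq_sin_div_cos, div_eq_div_iff hc (two_ne_zero)]
  rw [Complex.ext_iff]
  simp only [Complex.add_re, Complex.add_im, Complex.mul_re, Complex.mul_im,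
    Complex.sub_re, Complex.sub_im, Complex.neg_re, Complex.neg_im,
    Complex.ofReal_re, Complex.ofReal_im, Complex.I_re, Complex.I_im]
  ring_nf
  constructor
  · rintro ⟨h1, h2⟩
    exact mul_right_cancel₀ hQ (by linarith : Real.sin α * 2 * Q = Real.cos α * Q * Q)
  · intro h
    exact ⟨by linear_combination Q * h, trivial⟩
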